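/- For the function h(I₁,I₂,I₃,I₄) = I₂⁵/5 + I₁³/3 − I₁²/2 + I₁I₂/2 − I₃²/2 − I₄, the gradient at the origin is nonzero, and h is five-jet non-degenerate at the origin: the only vector v ∈ ℝ⁴ satisfying h¹[v] = 0, h²[v,v] = 0, h³[v,v,v] = 0, h⁴[v,v,v,v] = 0, and h⁵[v,v,v,v,v] = 0 is v = 0. -/
import Mathlib

/-- The function `h(I) = I₂⁵/5 + I₁³/3 − I₁²/2 + I₁I₂/2 − I₃²/2 − I₄`. -/
noncomputable def h : (Fin 4 → ℝ) → ℝ :=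
  fun I => (I 1) ^ 5 / 5 + (I 0) ^ 3 / 3 - (I 0) ^ 2 / 2
    + (I 0) * (I 1) / 2 - (I 2) ^ 2 / 2 - I 3

lemma h_contDiff : ContDiff ℝ ((⊤ : ℕ∞) : WithTop ℕ∞) h := by
  have hp : ∀ i, ContDiff ℝ ((⊤ : ℕ∞) : WithTop ℕ∞) fun I : Fin 4 → ℝ => I i :=
    fun i => contDiff_apply ℝ ℝ i
  unfold h
  exact ((((((hp 1).pow 5).div_const 5).add (((hp 0).pow 3).div_const 3)).sub
    (((hp 0).pow 2).div_const 2)).add (((hp 0).mul (hp 1)).div_const 2) |>.sub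
    (((hp 2).pow 2).div_const 2)).sub (hp 3)

open Polynomial in
lemma iteratedDeriv_polyeval (n : ℕ) (q : Polynomial ℝ) (x : ℝ) :
    iteratedDeriv n (fun t => q.eval t) x = (Polynomial.derivative^[n] q).eval x := by
  induction n generalizing q with
  | zero => simp
  | succ n ih =>
      rw [iteratedDeriv_succ']
      have : deriv (fun t : ℝ => q.eval t) = fun t => (derivative q).eval t :=
        funext fun t => (q.hasDerivAt t).deriv
      rw [this, ih, Function.iterate_succ_apply]

lemma iter_diag (v : Fin 4 → ℝ) (n : ℕ) :
    iteratedFDeriv ℝ n h 0 (fun _ => v) = iteratedDeriv n (fun t : ℝ => h (t • v)) 0 := by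
  set g : ℝ →L[ℝ] (Fin 4 → ℝ) := ContinuousLinearMap.smulRight (1 : ℝ →L[ℝ] ℝ) v with hg
  have hcomp := ContinuousLinearMap.iteratedFDeriv_comp_right g h_contDiff 0
    (by exact_mod_cast le_top : (n : WithTop ℕ∞) ≤ ((⊤ : ℕ∞) : WithTop ℕ∞))
  have hgf : h ∘ g = fun t : ℝ => h (t • v) := by funext t; simp [hg]
  have hg0 : g 0 = 0 := by simp [hg]
  rw [iteratedDeriv_eq_iteratedFDeriv]
  rw [hgf] at hcomp
  rw [hcomp]
  simp [ContinuousMultilinearMap.compContinuousLinearMap_apply, hg0, hg]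

open Polynomial in
noncomputable def q (v : Fin 4 → ℝ) : Polynomial ℝ :=
  C (v 1 ^ 5 / 5) * X ^ 5 + C (v 0 ^ 3 / 3) * X ^ 3
    + C (-(v 0 ^ 2) / 2 + v 0 * v 1 / 2 - v 2 ^ 2 / 2) * X ^ 2 + C (-(v 3)) * X

open Polynomial in
lemma key (v : Fin 4 → ℝ) (n : ℕ) :
    iteratedFDeriv ℝ n h 0 (fun _ => v) = (Polynomial.derivative^[n] (q v)).eval 0 := by
  have hq : (fun t : ℝ => h (t • v)) = fun t => (q v).eval t := by
    funext t; simp [h, q]; ring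
  rw [iter_diag, hq, iteratedDeriv_polyeval]

lemma key1 (v : Fin 4 → ℝ) : iteratedFDeriv ℝ 1 h 0 (fun _ => v) = -(v 3) := by
  rw [key]
  norm_num [q, Function.iterate_succ_apply', Polynomial.derivative_X_pow]

lemma key2 (v : Fin 4 → ℝ) :
    iteratedFDeriv ℝ 2 h 0 (fun _ => v) = -(v 0 ^ 2) + v 0 * v 1 - v 2 ^ 2 := by
  rw [key]
  norm_num [q, Function.iterate_succ_apply', Polynomial.derivative_X_pow]
  ring

lemma key3 (v : Fin 4 → ℝ) : iteratedFDeriv ℝ 3 h 0 (fun _ => v) = 2 * v 0 ^ 3 := by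
  rw [key]
  norm_num [q, Function.iterate_succ_apply', Polynomial.derivative_X_pow]
  ring

lemma key5 (v : Fin 4 → ℝ) : iteratedFDeriv ℝ 5 h 0 (fun _ => v) = 24 * v 1 ^ 5 := by
  rw [key]
  norm_num [q, Function.iterate_succ_apply', Polynomial.derivative_X_pow]
  ring

lemma fderiv_h (v : Fin 4 → ℝ) : fderiv ℝ h 0 v = -(v 3) := by
  have := key1 v
  rwa [iteratedFDeriv_one_apply] at this

/-- `h` has non-zero gradient at the origin and is five-jet non-degenerate there. -/
theorem h_five_jet_nondegenerate :
    fderiv ℝ h 0 ≠ 0 ∧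
    ∀ v : Fin 4 → ℝ,
      fderiv ℝ h 0 v = 0 →
      iteratedFDeriv ℝ 2 h 0 ![v, v] = 0 →
      iteratedFDeriv ℝ 3 h 0 ![v, v, v] = 0 →
      iteratedFDeriv ℝ 4 h 0 ![v, v, v, v] = 0 →
      iteratedFDeriv ℝ 5 h 0 ![v, v, v, v, v] = 0 →
      v = 0 := by
  constructor
  · intro heq
    have h1 := fderiv_h (fun _ => 1)
    rw [heq] at h1
    norm_num at h1
  · intro v h1 h2 h3 _ h5
    have e2 : (![v, v] : Fin 2 → Fin 4 → ℝ) = fun _ => v := by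
      funext i; fin_cases i <;> rfl
    have e3 : (![v, v, v] : Fin 3 → Fin 4 → ℝ) = fun _ => v := by
      funext i; fin_cases i <;> rfl
    have e5 : (![v, v, v, v, v] : Fin 5 → Fin 4 → ℝ) = fun _ => v := by
      funext i; fin_cases i <;> rfl
    rw [fderiv_h] at h1
    rw [e2, key2] at h2
    rw [e3, key3] at h3
    rw [e5, key5] at h5
    have hv0 : v 0 = 0 := by
      have : v 0 ^ 3 = 0 := by linarith
      exact pow_eq_zero_iff (by norm_num) |>.mp this
    have hv1 : v 1 = 0 := by
      have : v 1 ^ 5 = 0 := by linarith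
      exact pow_eq_zero_iff (by norm_num) |>.mp this
    have hv2 : v 2 = 0 := by
      have : v 2 ^ 2 = 0 := by rw [hv0] at h2; linarith
      exact pow_eq_zero_iff (by norm_num) |>.mp this
    have hv3 : v 3 = 0 := by linarith
    funext i
    fin_cases i <;> simp [hv0, hv1, hv2, hv3]
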